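/- Let T be a tree (a partial order in which the set of strict predecessors of each element is well-ordered) of height ω₁ in which every element has countable height and every level is nonempty. If every chain of T is countable, then for every countable subset X of T there exists an element of T not in the closure of X with respect to the tree topology; in particular T with the tree topology is not separable. -/

import Mathlib

/-- The height of a node of a tree: the order type of its set of strict predecessors. -/
noncomputable def treeHeight {T : Type*} [PartialOrder T]
    (hwo : ∀ t : T, IsWellOrder {s // s < t} (· < ·)) (t : T) : Ordinal :=
  @Ordinal.type {s // s < t} (· < ·) (hwo t)

/-- The upward cone of a node. -/
def upCone {T : Type*} [PartialOrder T] (t : T) : Set T := {x | t ≤ x}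

/-- The tree topology: generated by the upward cones at nodes of successor height
together with their complements. -/
noncomputable def treeTopology {T : Type*} [PartialOrder T]
    (hwo : ∀ t : T, IsWellOrder {s // s < t} (· < ·)) : TopologicalSpace T :=
  TopologicalSpace.generateFrom
    {S | ∃ t : T, (∃ a, treeHeight hwo t = a + 1) ∧ (S = upCone t ∨ S = (upCone t)ᶜ)}

/-- Height is strictly monotone along the tree order. -/
theorem treeHeight_strictMono {T : Type*} [PartialOrder T]
    (hwo : ∀ t : T, IsWellOrder {s // s < t} (· < ·)) {s t : T} (h : s < t) :
    treeHeight hwo s < treeHeight hwo t := by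
  letI := hwo t
  letI := hwo s
  have key : treeHeight hwo s = Ordinal.typein (α := {p // p < t}) (· < ·) ⟨s, h⟩ := by
    rw [← Ordinal.type_subrel]
    refine Ordinal.type_eq.mpr ⟨?_⟩
    refine RelIso.symm ⟨Equiv.ofBijective (fun q => ⟨q.1.1, q.2⟩) ⟨?_, ?_⟩, ?_⟩
    · rintro ⟨⟨a, _⟩, _⟩ ⟨⟨b, _⟩, _⟩ hab
      simpa using hab
    · rintro ⟨a, ha⟩
      exact ⟨⟨⟨a, ha.trans h⟩, ha⟩, rfl⟩
    · rintro ⟨⟨a, _⟩, _⟩ ⟨⟨b, _⟩, _⟩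
      simp [Subtype.mk_lt_mk, Subrel, Order.Preimage]
      exact Iff.rfl
  rw [key]
  exact Ordinal.typein_lt_type _ _

/-- Height is monotone along the tree order. -/
theorem treeHeight_mono {T : Type*} [PartialOrder T]
    (hwo : ∀ t : T, IsWellOrder {s // s < t} (· < ·)) {s t : T} (h : s ≤ t) :
    treeHeight hwo s ≤ treeHeight hwo t := by
  rcases h.lt_or_eq with h' | rfl
  · exact (treeHeight_strictMono hwo h').le
  · exact le_rfl

theorem stmt_14 {T : Type*} [PartialOrder T]
    (hwo : ∀ t : T, IsWellOrder {s // s < t} (· < ·))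
    (hht : ∀ t : T, treeHeight hwo t < (Cardinal.aleph 1).ord)
    (hlevels : ∀ α : Ordinal, α < (Cardinal.aleph 1).ord → ∃ t : T, treeHeight hwo t = α)
    (hchain : ∀ C : Set T, IsChain (· ≤ ·) C → C.Countable) :
    (∀ X : Set T, X.Countable → ∃ t : T, t ∉ @closure T (treeTopology hwo) X) ∧
      ¬ ∃ D : Set T, D.Countable ∧ @Dense T (treeTopology hwo) D := by
  have main : ∀ X : Set T, X.Countable → ∃ t : T, t ∉ @closure T (treeTopology hwo) X := by
    intro X hX
    letI : TopologicalSpace T := treeTopology hwo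
    -- the supremum of heights of elements of X
    set σ : Ordinal := ⨆ x : X, treeHeight hwo x.1 with hσ
    have hσlt : σ < (Cardinal.aleph 1).ord := by
      apply Ordinal.iSup_lt_ord
      · rw [Cardinal.isRegular_aleph_one.cof_eq]
        exact (Cardinal.countable_iff_lt_aleph_one X).mp hX
      · exact fun x => hht x.1
    have hsucc : σ + 1 < (Cardinal.aleph 1).ord := by
      have : Order.IsSuccLimit (Cardinal.aleph 1).ord :=
        Cardinal.isSuccLimit_ord (Cardinal.aleph0_le_aleph 1)
      exact this.succ_lt hσlt
    obtain ⟨t, ht⟩ := hlevels (σ + 1) hsucc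
    refine ⟨t, ?_⟩
    -- `upCone t` is open in the tree topology
    have hopen : IsOpen (upCone t) :=
      TopologicalSpace.GenerateOpen.basic _ ⟨t, ⟨σ, ht⟩, Or.inl rfl⟩
    have hXsub : X ⊆ (upCone t)ᶜ := by
      intro x hx hmem
      have h1 : treeHeight hwo t ≤ treeHeight hwo x := treeHeight_mono hwo hmem
      have h2 : treeHeight hwo x ≤ σ := le_ciSup (f := fun x : X => treeHeight hwo x.1)
        (Ordinal.bddAbove_range _) ⟨x, hx⟩
      rw [ht] at h1
      exact absurd (h1.trans h2) (by simp [Order.succ_le_iff])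
    have hcl : closure X ⊆ (upCone t)ᶜ :=
      closure_minimal hXsub hopen.isClosed_compl
    intro hmem
    exact hcl hmem (le_refl t)
  refine ⟨main, ?_⟩
  rintro ⟨D, hDc, hDd⟩
  obtain ⟨t, ht⟩ := main D hDc
  exact ht (hDd t)
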